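/- In the graph H_k whose vertices are barcodes of 4-bars of S_k and whose edges correspond to barcodes of 5-bars, the vertex s corresponding to the full 4-bar (all 4k vertices) has a self-loop, and from any vertex v there is a directed path of at most 4 edges to s: extending any barcode of a 4-bar by a full column always yields a barcode of a 5-bar. Consequently H_k is strongly connected. -/

import Mathlib

/-- The strip S_k: vertex set the integers times {0,...,k-1}, with edges
between vertices at Euclidean distance 1. -/
def strip (k : ℕ) : SimpleGraph (ℤ × Fin k) where
  Adj p q := (p.1 - q.1).natAbs + ((p.2 : ℤ) - (q.2 : ℤ)).natAbs = 1
  symm := ⟨by intro p q h; omega⟩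
  loopless := ⟨by intro p h; omega⟩

/-- Closed neighborhood N[v] (taken in the strip S_k). -/
def closedNbhd {V : Type*} (G : SimpleGraph V) (v : V) : Set V :=
  {u | u = v ∨ G.Adj u v}

/-- P is a barcode of the l-bar of S_k occupying columns j,...,j+l-1:
P is a subset of the bar satisfying the identifying-code conditions locally
for the vertices of the middle columns j+1,...,j+l-2. -/
def IsBarcode (k : ℕ) (j l : ℤ) (P : Set (ℤ × Fin k)) : Prop :=
  (∀ p ∈ P, j ≤ p.1 ∧ p.1 < j + l) ∧
  (∀ v : ℤ × Fin k, j + 1 ≤ v.1 → v.1 < j + l - 1 →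
    (closedNbhd (strip k) v ∩ P).Nonempty) ∧
  (∀ u v : ℤ × Fin k, j + 1 ≤ u.1 → u.1 < j + l - 1 →
    j + 1 ≤ v.1 → v.1 < j + l - 1 → u ≠ v →
    closedNbhd (strip k) u ∩ P ≠ closedNbhd (strip k) v ∩ P)

/-- The edge relation of the digraph H_k on barcodes of 4-bars (normalized to
columns 0,...,3): there is an edge from P to P' when some barcode Q of a
5-bar induces P on its first 4 columns and (a shifted copy of) P' on its
last 4 columns. -/
def HkAdj (k : ℕ) (P P' : Set (ℤ × Fin k)) : Prop :=
  ∃ Q : Set (ℤ × Fin k), IsBarcode k 0 5 Q ∧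
    P = {p ∈ Q | p.1 ≤ 3} ∧
    P' = {p : ℤ × Fin k | 0 ≤ p.1 ∧ (p.1 + 1, p.2) ∈ Q}

/-- The barcode consisting of all 4k vertices of the 4-bar on columns
0,...,3. -/
def fullBar (k : ℕ) : Set (ℤ × Fin k) :=
  {p : ℤ × Fin k | 0 ≤ p.1 ∧ p.1 ≤ 3}

section HkAux

variable {k : ℕ} {P Q : Set (ℤ × Fin k)}

/-- The column-4 set. -/
def colFour (k : ℕ) : Set (ℤ × Fin k) := {p : ℤ × Fin k | p.1 = 4}

/-- Append a full column and shift back: the successor operation. -/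
def appF (k : ℕ) (P : Set (ℤ × Fin k)) : Set (ℤ × Fin k) :=
  {p : ℤ × Fin k | 0 ≤ p.1 ∧ (p.1 + 1, p.2) ∈ P ∪ colFour k}

/-- The prepend-a-full-column operation (restricted to the first 4 columns). -/
def preQ (k : ℕ) (P : Set (ℤ × Fin k)) : Set (ℤ × Fin k) :=
  {p : ℤ × Fin k | p.1 = 0 ∨ (1 ≤ p.1 ∧ (p.1 - 1, p.2) ∈ P)}

def preF (k : ℕ) (P : Set (ℤ × Fin k)) : Set (ℤ × Fin k) :=
  {p ∈ preQ k P | p.1 ≤ 3}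

lemma mem_cn {w v : ℤ × Fin k} :
    w ∈ closedNbhd (strip k) v ↔
      (w.1 = v.1 ∧ w.2 = v.2) ∨ (w.1 - v.1).natAbs + ((w.2 : ℤ) - (v.2 : ℤ)).natAbs = 1 := by
  simp [closedNbhd, strip, Prod.ext_iff]

lemma cn_col {w v : ℤ × Fin k} (h : w ∈ closedNbhd (strip k) v) :
    v.1 - 1 ≤ w.1 ∧ w.1 ≤ v.1 + 1 := by
  rcases mem_cn.mp h with ⟨h1, _⟩ | h1 <;> omega

lemma sep_witness (u v : ℤ × Fin k) (h : u ≠ v) :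
    ∃ w : ℤ × Fin k, w ∈ closedNbhd (strip k) u ∧ w ∉ closedNbhd (strip k) v ∧
      u.1 - 1 ≤ w.1 ∧ w.1 ≤ u.1 + 1 ∧ w.2 = u.2 := by
  by_cases hadj : (u.1 - v.1).natAbs + ((u.2 : ℤ) - (v.2 : ℤ)).natAbs = 1
  · by_cases hc : (u.1 - v.1).natAbs = 1
    · refine ⟨(2 * u.1 - v.1, u.2), ?_, ?_, by omega, by omega, rfl⟩
      · rw [mem_cn]; right; simp; omega
      · rw [mem_cn]; rintro (⟨h1, h2⟩ | h1) <;> simp_all <;> omega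
    · refine ⟨(u.1 + 1, u.2), ?_, ?_, by omega, by omega, rfl⟩
      · rw [mem_cn]; right; simp
      · rw [mem_cn]; rintro (⟨h1, h2⟩ | h1) <;> simp_all <;> omega
  · refine ⟨u, ?_, ?_, by omega, by omega, rfl⟩
    · rw [mem_cn]; exact Or.inl ⟨rfl, rfl⟩
    · rw [mem_cn]; rintro (⟨h1, h2⟩ | h1)
      · exact h (Prod.ext h1 h2)
      · exact hadj h1

lemma append_barcode (h : IsBarcode k 0 4 P) :
    IsBarcode k 0 5 (P ∪ {p : ℤ × Fin k | p.1 = 4}) := by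
  obtain ⟨hsub, hdom, hsep⟩ := h
  refine ⟨?_, ?_, ?_⟩
  · rintro p (hp | hp)
    · have := hsub p hp; omega
    · simp only [Set.mem_setOf_eq] at hp; omega
  · intro v h1 h2
    by_cases hv : v.1 ≤ 2
    · obtain ⟨w, hw1, hw2⟩ := hdom v (by omega) (by omega)
      exact ⟨w, hw1, Or.inl hw2⟩
    · refine ⟨(4, v.2), ?_, Or.inr rfl⟩
      rw [mem_cn]; right; simp; omega
  · intro u v hu1 hu2 hv1 hv2 huv heq
    by_cases hu : u.1 ≤ 2
    · by_cases hv : v.1 ≤ 2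
      · refine hsep u v (by omega) (by omega) (by omega) (by omega) huv ?_
        ext w
        have hw := Set.ext_iff.mp heq w
        simp only [Set.mem_inter_iff, Set.mem_union, Set.mem_setOf_eq] at hw ⊢
        constructor
        · rintro ⟨hn, hp⟩
          exact ⟨(hw.mp ⟨hn, Or.inl hp⟩).1, hp⟩
        · rintro ⟨hn, hp⟩
          exact ⟨(hw.mpr ⟨hn, Or.inl hp⟩).1, hp⟩
      · have h4 : ((4 : ℤ), v.2) ∈ closedNbhd (strip k) v := by
          rw [mem_cn]; right; simp; omega
        have hmem := (Set.ext_iff.mp heq ((4 : ℤ), v.2)).mpr ⟨h4, Or.inr rfl⟩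
        have := cn_col hmem.1
        simp at this; omega
    · by_cases hv : v.1 ≤ 2
      · have h4 : ((4 : ℤ), u.2) ∈ closedNbhd (strip k) u := by
          rw [mem_cn]; right; simp; omega
        have hmem := (Set.ext_iff.mp heq ((4 : ℤ), u.2)).mp ⟨h4, Or.inr rfl⟩
        have := cn_col hmem.1
        simp at this; omega
      · have h4 : ((4 : ℤ), u.2) ∈ closedNbhd (strip k) u := by
          rw [mem_cn]; right; simp; omega
        have hmem := (Set.ext_iff.mp heq ((4 : ℤ), u.2)).mp ⟨h4, Or.inr rfl⟩
        rcases mem_cn.mp hmem.1 with ⟨h1, h2⟩ | h1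
        · simp at h1; omega
        · exact huv (Prod.ext (by omega) (Fin.ext (by simp at h1; omega)))

lemma shift_barcode (h : IsBarcode k 0 5 Q) :
    IsBarcode k 0 4 {p : ℤ × Fin k | 0 ≤ p.1 ∧ (p.1 + 1, p.2) ∈ Q} := by
  obtain ⟨hsub, hdom, hsep⟩ := h
  have pair_eq : ∀ w : ℤ × Fin k, (w.1 - 1 + 1, w.2) = w := by
    intro w; rw [sub_add_cancel]
  refine ⟨?_, ?_, ?_⟩
  · rintro p ⟨h0, hp⟩
    have := hsub _ hp; simp at this; omega
  · intro v h1 h2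
    obtain ⟨w, hw1, hw2⟩ := hdom (v.1 + 1, v.2) (by simp; omega) (by simp; omega)
    have hcol := cn_col hw1
    simp only at hcol
    refine ⟨(w.1 - 1, w.2), ?_, ?_, ?_⟩
    · rcases mem_cn.mp hw1 with ⟨ha, hb⟩ | ha
      · rw [mem_cn]; exact Or.inl ⟨by simp at ha ⊢; omega, hb⟩
      · rw [mem_cn]; right; simp only at ha ⊢; omega
    · simp only [Set.mem_setOf_eq]; omega
    · simp only [Set.mem_setOf_eq]
      rw [pair_eq w]; exact hw2
  · intro u v hu1 hu2 hv1 hv2 huv heq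
    refine hsep (u.1 + 1, u.2) (v.1 + 1, v.2) (by simp; omega) (by simp; omega)
      (by simp; omega) (by simp; omega)
      (by intro hh; apply huv; rw [Prod.ext_iff] at hh ⊢
          exact ⟨by have := hh.1; simp at this; omega, hh.2⟩) ?_
    ext w
    simp only [Set.mem_inter_iff]
    have key : ∀ x y : ℤ × Fin k, 1 ≤ x.1 → x.1 ≤ 2 →
        (closedNbhd (strip k) x ∩ {p : ℤ × Fin k | 0 ≤ p.1 ∧ (p.1 + 1, p.2) ∈ Q}
          ⊆ closedNbhd (strip k) y ∩ {p : ℤ × Fin k | 0 ≤ p.1 ∧ (p.1 + 1, p.2) ∈ Q}) →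
        w ∈ closedNbhd (strip k) (x.1 + 1, x.2) ∩ Q →
        w ∈ closedNbhd (strip k) (y.1 + 1, y.2) ∩ Q := by
      intro x y hx1 hx2 hsubset ⟨hwN, hwQ⟩
      have hcol := cn_col hwN
      simp only at hcol
      have hmem : (w.1 - 1, w.2) ∈ closedNbhd (strip k) x ∩
          {p : ℤ × Fin k | 0 ≤ p.1 ∧ (p.1 + 1, p.2) ∈ Q} := by
        constructor
        · rcases mem_cn.mp hwN with ⟨ha, hb⟩ | ha
          · rw [mem_cn]; exact Or.inl ⟨by simp at ha ⊢; omega, hb⟩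
          · rw [mem_cn]; right; simp only at ha ⊢; omega
        · refine ⟨by omega, ?_⟩
          simp only
          rw [pair_eq w]; exact hwQ
      obtain ⟨hN', ⟨_, hQ'⟩⟩ := hsubset hmem
      constructor
      · rcases mem_cn.mp hN' with ⟨ha, hb⟩ | ha
        · rw [mem_cn]; exact Or.inl ⟨by simp at ha ⊢; omega, hb⟩
        · rw [mem_cn]; right; simp only at ha ⊢; omega
      · simp only at hQ'
        rw [pair_eq w] at hQ'; exact hQ'
    constructor
    · exact fun hw => key u v (by omega) (by omega) (le_of_eq heq) hw
    · exact fun hw => key v u (by omega) (by omega) (le_of_eq heq.symm) hw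

lemma restrict_first (h : IsBarcode k 0 5 Q) :
    IsBarcode k 0 4 {p ∈ Q | p.1 ≤ 3} := by
  obtain ⟨hsub, hdom, hsep⟩ := h
  refine ⟨?_, ?_, ?_⟩
  · rintro p ⟨hp, h3⟩
    have := hsub p hp; omega
  · intro v h1 h2
    obtain ⟨w, hw1, hw2⟩ := hdom v (by omega) (by omega)
    have := cn_col hw1
    exact ⟨w, hw1, hw2, by omega⟩
  · intro u v hu1 hu2 hv1 hv2 huv heq
    refine hsep u v (by omega) (by omega) (by omega) (by omega) huv ?_
    ext w
    have hw := Set.ext_iff.mp heq w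
    simp only [Set.mem_inter_iff, Set.mem_setOf_eq] at hw ⊢
    constructor
    · rintro ⟨hn, hq⟩
      have hcol := cn_col hn
      exact ⟨(hw.mp ⟨hn, hq, by omega⟩).1, (hw.mp ⟨hn, hq, by omega⟩).2.1⟩
    · rintro ⟨hn, hq⟩
      have hcol := cn_col hn
      exact ⟨(hw.mpr ⟨hn, hq, by omega⟩).1, (hw.mpr ⟨hn, hq, by omega⟩).2.1⟩

lemma fullBar_barcode : IsBarcode k 0 4 (fullBar k) := by
  refine ⟨?_, ?_, ?_⟩
  · rintro p ⟨h0, h3⟩; omega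
  · intro v h1 h2
    exact ⟨v, mem_cn.mpr (Or.inl ⟨rfl, rfl⟩), by constructor <;> omega⟩
  · intro u v hu1 hu2 hv1 hv2 huv heq
    obtain ⟨w, hw1, hw2, hw3, hw4, hw5⟩ := sep_witness u v huv
    have : w ∈ closedNbhd (strip k) v ∩ fullBar k :=
      heq ▸ ⟨hw1, by constructor <;> omega⟩
    exact hw2 this.1

lemma prepend_barcode (h : IsBarcode k 0 4 P) : IsBarcode k 0 5 (preQ k P) := by
  obtain ⟨hsub, hdom, hsep⟩ := h
  have pair_eq : ∀ w : ℤ × Fin k, (w.1 + 1 - 1, w.2) = w := by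
    intro w; rw [add_sub_cancel_right]
  refine ⟨?_, ?_, ?_⟩
  · rintro p (h0 | ⟨h1, hp⟩)
    · omega
    · have := hsub _ hp; simp at this; omega
  · intro v h1 h2
    by_cases hv : v.1 = 1
    · refine ⟨(0, v.2), ?_, Or.inl rfl⟩
      rw [mem_cn]; right; simp; omega
    · obtain ⟨w, hw1, hw2⟩ := hdom (v.1 - 1, v.2) (by simp; omega) (by simp; omega)
      have hcol := cn_col hw1
      simp only at hcol
      refine ⟨(w.1 + 1, w.2), ?_, Or.inr ⟨by omega, ?_⟩⟩
      · rcases mem_cn.mp hw1 with ⟨ha, hb⟩ | ha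
        · rw [mem_cn]; exact Or.inl ⟨by simp at ha ⊢; omega, hb⟩
        · rw [mem_cn]; right; simp only at ha ⊢; omega
      · show ((w.1 + 1 - 1 : ℤ), w.2) ∈ P
        rw [pair_eq w]; exact hw2
  · intro u v hu1 hu2 hv1 hv2 huv heq
    by_cases hu : u.1 = 1
    · have h0 : ((0 : ℤ), u.2) ∈ closedNbhd (strip k) u := by
        rw [mem_cn]; right; simp; omega
      have hmem := (Set.ext_iff.mp heq ((0 : ℤ), u.2)).mp ⟨h0, Or.inl rfl⟩
      rcases mem_cn.mp hmem.1 with ⟨ha, hb⟩ | ha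
      · simp at ha; omega
      · simp only at ha
        refine huv (Prod.ext (by omega) (Fin.ext (by omega)))
    · by_cases hv : v.1 = 1
      · have h0 : ((0 : ℤ), v.2) ∈ closedNbhd (strip k) v := by
          rw [mem_cn]; right; simp; omega
        have hmem := (Set.ext_iff.mp heq ((0 : ℤ), v.2)).mpr ⟨h0, Or.inl rfl⟩
        rcases mem_cn.mp hmem.1 with ⟨ha, hb⟩ | ha
        · simp at ha; omega
        · simp only at ha
          refine huv (Prod.ext (by omega) (Fin.ext (by omega)))
      · refine hsep (u.1 - 1, u.2) (v.1 - 1, v.2) (by simp; omega) (by simp; omega)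
          (by simp; omega) (by simp; omega)
          (by intro hh; apply huv; rw [Prod.ext_iff] at hh ⊢
              exact ⟨by have := hh.1; simp at this; omega, hh.2⟩) ?_
        ext w
        simp only [Set.mem_inter_iff]
        have key : ∀ x y : ℤ × Fin k, 2 ≤ x.1 → x.1 ≤ 3 → 2 ≤ y.1 →
            (closedNbhd (strip k) x ∩ preQ k P ⊆ closedNbhd (strip k) y ∩ preQ k P) →
            w ∈ closedNbhd (strip k) (x.1 - 1, x.2) ∩ P →
            w ∈ closedNbhd (strip k) (y.1 - 1, y.2) ∩ P := by
          intro x y hx1 hx2 hy1 hsubset ⟨hwN, hwP⟩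
          have hcol := cn_col hwN
          simp only at hcol
          have hmem : (w.1 + 1, w.2) ∈ closedNbhd (strip k) x ∩ preQ k P := by
            constructor
            · rcases mem_cn.mp hwN with ⟨ha, hb⟩ | ha
              · rw [mem_cn]; exact Or.inl ⟨by simp at ha ⊢; omega, hb⟩
              · rw [mem_cn]; right; simp only at ha ⊢; omega
            · refine Or.inr ⟨by omega, ?_⟩
              show ((w.1 + 1 - 1 : ℤ), w.2) ∈ P
              rw [pair_eq w]; exact hwP
          obtain ⟨hN', hQ'⟩ := hsubset hmem
          constructor
          · rcases mem_cn.mp hN' with ⟨ha, hb⟩ | ha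
            · rw [mem_cn]; exact Or.inl ⟨by simp at ha ⊢; omega, hb⟩
            · rw [mem_cn]; right; simp only at ha ⊢; omega
          · rcases hQ' with h0 | ⟨_, hP'⟩
            · simp at h0; omega
            · rw [show ((w.1 + 1, w.2) : ℤ × Fin k).1 - 1 = w.1 + 1 - 1 from rfl,
                pair_eq w] at hP'
              exact hP'
        constructor
        · exact fun hw => key u v (by omega) (by omega) (by omega) (le_of_eq heq) hw
        · exact fun hw => key v u (by omega) (by omega) (by omega) (le_of_eq heq.symm) hw

lemma edge_app (h : IsBarcode k 0 4 P) : HkAdj k P (appF k P) := by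
  refine ⟨P ∪ {p : ℤ × Fin k | p.1 = 4}, append_barcode h, ?_, rfl⟩
  ext p
  simp only [Set.mem_union, Set.mem_setOf_eq]
  constructor
  · intro hp
    have := h.1 p hp
    exact ⟨Or.inl hp, by omega⟩
  · rintro ⟨hp | hp, h3⟩
    · exact hp
    · omega

lemma appF_barcode (h : IsBarcode k 0 4 P) : IsBarcode k 0 4 (appF k P) :=
  shift_barcode (append_barcode h)

lemma edge_pre (h : IsBarcode k 0 4 P) : HkAdj k (preF k P) P := by
  refine ⟨preQ k P, prepend_barcode h, rfl, ?_⟩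
  ext p
  simp only [Set.mem_setOf_eq, preQ]
  constructor
  · intro hp
    have := h.1 p hp
    refine ⟨by omega, Or.inr ⟨by omega, ?_⟩⟩
    show ((p.1 + 1 - 1 : ℤ), p.2) ∈ P
    rw [add_sub_cancel_right]; exact hp
  · rintro ⟨h0, h1 | ⟨h1, hp⟩⟩
    · omega
    · rw [show ((p.1 + 1, p.2) : ℤ × Fin k).1 - 1 = p.1 + 1 - 1 from rfl,
        add_sub_cancel_right] at hp
      exact hp

lemma preF_barcode (h : IsBarcode k 0 4 P) : IsBarcode k 0 4 (preF k P) :=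
  restrict_first (prepend_barcode h)

lemma appF_iter4 (hP : ∀ p ∈ P, 0 ≤ p.1 ∧ p.1 < 4) :
    appF k (appF k (appF k (appF k P))) = fullBar k := by
  ext ⟨x, y⟩
  simp only [appF, colFour, fullBar, Set.mem_union, Set.mem_setOf_eq]
  constructor
  · rintro ⟨h0, ⟨h1, ⟨h2, ⟨h3, hp | e⟩ | e⟩ | e⟩ | e⟩
    · have := hP _ hp; simp at this; omega
    all_goals omega
  · rintro ⟨h0, h3⟩
    rcases (by omega : x = 0 ∨ x = 1 ∨ x = 2 ∨ x = 3) with h | h | h | h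
    · exact ⟨by omega, Or.inl ⟨by omega, Or.inl ⟨by omega, Or.inl ⟨by omega, Or.inr (by omega)⟩⟩⟩⟩
    · exact ⟨by omega, Or.inl ⟨by omega, Or.inl ⟨by omega, Or.inr (by omega)⟩⟩⟩
    · exact ⟨by omega, Or.inl ⟨by omega, Or.inr (by omega)⟩⟩
    · exact ⟨by omega, Or.inr (by omega)⟩

lemma preF_iter4 (X : Set (ℤ × Fin k)) :
    preF k (preF k (preF k (preF k X))) = fullBar k := by
  ext ⟨x, y⟩
  simp only [preF, preQ, fullBar, Set.mem_setOf_eq]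
  constructor
  · rintro ⟨e | ⟨h1, ⟨e | ⟨h2, ⟨e | ⟨h3, ⟨e | ⟨h4, _⟩, _⟩⟩, _⟩⟩, _⟩⟩, hx⟩
    all_goals omega
  · rintro ⟨h0, h3⟩
    rcases (by omega : x = 0 ∨ x = 1 ∨ x = 2 ∨ x = 3) with h | h | h | h
    · exact ⟨Or.inl (by omega), by omega⟩
    · exact ⟨Or.inr ⟨by omega, Or.inl (by omega), by omega⟩, by omega⟩
    · exact ⟨Or.inr ⟨by omega, Or.inr ⟨by omega, Or.inl (by omega), by omega⟩, by omega⟩, by omega⟩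
    · exact ⟨Or.inr ⟨by omega, Or.inr ⟨by omega, Or.inr ⟨by omega, Or.inl (by omega), by omega⟩,
        by omega⟩, by omega⟩, by omega⟩

end HkAux
/-- In H_k: extending any barcode of a 4-bar by a full column yields a barcode
of a 5-bar; the full 4-bar barcode s has a self-loop; every barcode has a
directed path of at most 4 edges to s; and H_k is strongly connected. -/
theorem Hk_strongly_connected (k : ℕ) (hk : 0 < k) :
    (∀ P : Set (ℤ × Fin k), IsBarcode k 0 4 P →
      IsBarcode k 0 5 (P ∪ {p : ℤ × Fin k | p.1 = 4})) ∧
    HkAdj k (fullBar k) (fullBar k) ∧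
    (∀ P : Set (ℤ × Fin k), IsBarcode k 0 4 P →
      ∃ (m : ℕ) (c : ℕ → Set (ℤ × Fin k)), m ≤ 4 ∧ c 0 = P ∧
        c m = fullBar k ∧ ∀ i < m, HkAdj k (c i) (c (i + 1))) ∧
    (∀ P P' : Set (ℤ × Fin k), IsBarcode k 0 4 P → IsBarcode k 0 4 P' →
      Relation.ReflTransGen (HkAdj k) P P') := by
  have bounds4 : ∀ P : Set (ℤ × Fin k), IsBarcode k 0 4 P →
      ∀ p ∈ P, 0 ≤ p.1 ∧ p.1 < 4 := by
    intro P hP p hp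
    have := hP.1 p hp; omega
  have appF_full : appF k (fullBar k) = fullBar k := by
    ext ⟨x, y⟩
    simp only [appF, colFour, fullBar, Set.mem_union, Set.mem_setOf_eq]
    omega
  refine ⟨fun P hP => append_barcode hP, ?_, ?_, ?_⟩
  · have h := edge_app (fullBar_barcode (k := k))
    rwa [appF_full] at h
  · intro P hP
    refine ⟨4, fun i => Nat.rec P (fun _ S => appF k S) i, le_refl 4, rfl, ?_, ?_⟩
    · show appF k (appF k (appF k (appF k P))) = fullBar k
      exact appF_iter4 (bounds4 P hP)
    · have hbar : ∀ i : ℕ, IsBarcode k 0 4 (Nat.rec P (fun _ S => appF k S) i : Set (ℤ × Fin k)) := by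
        intro i
        induction i with
        | zero => exact hP
        | succ i ih => exact appF_barcode ih
      intro i _
      exact edge_app (hbar i)
  · intro P P' hP hP'
    -- forward path P →* fullBar
    have a1 := edge_app hP
    have b1 := appF_barcode hP
    have a2 := edge_app b1
    have b2 := appF_barcode b1
    have a3 := edge_app b2
    have b3 := appF_barcode b2
    have a4 := edge_app b3
    have fwd : Relation.ReflTransGen (HkAdj k) P (appF k (appF k (appF k (appF k P)))) :=
      ((((Relation.ReflTransGen.refl).tail a1).tail a2).tail a3).tail a4
    rw [appF_iter4 (bounds4 P hP)] at fwd
    -- backward path fullBar →* P'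
    have e1 := edge_pre hP'
    have c1 := preF_barcode hP'
    have e2 := edge_pre c1
    have c2 := preF_barcode c1
    have e3 := edge_pre c2
    have c3 := preF_barcode c2
    have e4 := edge_pre c3
    have bwd : Relation.ReflTransGen (HkAdj k) (preF k (preF k (preF k (preF k P')))) P' :=
      .head e4 (.head e3 (.head e2 (.head e1 .refl)))
    rw [preF_iter4 P'] at bwd
    exact fwd.trans bwd
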